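/- Let P and S be languages over Σ with S nonempty, let Σuo ⊆ Σ, and suppose the equation P ∩ X = S has a prefix-closed solution. Then the equation has a prefix-closed solution under partial observability (a prefix-closed C with P ∩ C = S and P ∩ Fold(C) = S) if and only if Real(Init(S)) ⊆ compl(P) ∪ S. -/

import Mathlib

/-!
Supervisory control via language equation solving: common definitions.
A language over alphabet `α` is a set of finite words `Set (List α)`.
-/

variable {α : Type*}

/-- Prefix closure of a language: `Init(L) = {u | ∃ v, u ++ v ∈ L}`. -/
def InitL (L : Set (List α)) : Set (List α) := {u | ∃ v, u ++ v ∈ L}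

/-- A language is prefix-closed if it contains its prefix closure. -/
def IsPrefixClosed (L : Set (List α)) : Prop := InitL L ⊆ L

/-- `M^pref`: the largest prefix-closed sublanguage of `M`. -/
def prefCl (M : Set (List α)) : Set (List α) := {w | w ∈ M ∧ ∀ p : List α, p <+: w → p ∈ M}

/-- The partial trace map `tr_L` for the `Σuc`-extension, as a graph relation:
`Tr L Suc w t` means `tr_L(w)` is defined and equals `t`. -/
inductive Tr (L : Set (List α)) (Suc : Set α) : List α → List α → Prop
  | nil : Tr L Suc [] []
  | keep {p t : List α} {a : α} : Tr L Suc p t → t ++ [a] ∈ L → Tr L Suc (p ++ [a]) (t ++ [a])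
  | drop {p t : List α} {a : α} : Tr L Suc p t → t ++ [a] ∉ L → a ∈ Suc → Tr L Suc (p ++ [a]) t

/-- `Σuc`-extension of a language: `Ext(L) = {w | tr_L(w) is defined}`. -/
def ExtL (L : Set (List α)) (Suc : Set α) : Set (List α) := {w | ∃ t, Tr L Suc w t}

open Classical in
/-- `π`: erase all letters of `Suo` from a word. -/
noncomputable def proj (Suo : Set α) : List α → List α
  | [] => []
  | a :: w => if a ∈ Suo then proj Suo w else a :: proj Suo w

/-- `Σuo`-folding of a language. -/
def Fold (Suo : Set α) (L : Set (List α)) : Set (List α) :=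
  {w | proj Suo w ∈ L ∧ ∀ (p : List α) (a : α), p ++ [a] <+: w → a ∈ Suo → proj Suo p ++ [a] ∈ L}

/-- `Real(L)` for a nonempty prefix-closed language `L`. -/
def RealL (Suo : Set α) (L : Set (List α)) : Set (List α) :=
  {w | ∀ (p q : List α) (a : α), w = p ++ [a] ++ q →
    ∃ u : List α, proj Suo u = proj Suo p ∧ u ++ [a] ∈ L}

/-- Concatenation of languages. -/
def conc (L M : Set (List α)) : Set (List α) := {w | ∃ u ∈ L, ∃ v ∈ M, w = u ++ v}

/-- `A*`: all words whose letters all lie in the subalphabet `A`. -/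
def ucStar (A : Set α) : Set (List α) := {w | ∀ a ∈ w, a ∈ A}

section Aux

variable {Suo : Set α}

lemma proj_append (Suo : Set α) (u v : List α) :
    proj Suo (u ++ v) = proj Suo u ++ proj Suo v := by
  induction u with
  | nil => simp [proj]
  | cons a u ih => by_cases h : a ∈ Suo <;> simp [proj, h, ih]

lemma mem_proj_not_mem (Suo : Set α) {a : α} :
    ∀ {w : List α}, a ∈ proj Suo w → a ∉ Suo := by
  intro w
  induction w with
  | nil => simp [proj]
  | cons b w ih =>
    by_cases h : b ∈ Suo
    · simpa [proj, h] using ih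
    · simp only [proj, if_neg h, List.mem_cons]
      rintro (rfl | hm)
      · exact h
      · exact ih hm

lemma proj_eq_self (Suo : Set α) {w : List α} (h : ∀ a ∈ w, a ∉ Suo) :
    proj Suo w = w := by
  induction w with
  | nil => rfl
  | cons a w ih =>
    have ha : a ∉ Suo := h a List.mem_cons_self
    simp only [proj, if_neg ha]
    rw [ih fun b hb => h b (List.mem_cons_of_mem a hb)]

lemma proj_proj (Suo : Set α) (w : List α) :
    proj Suo (proj Suo w) = proj Suo w :=
  proj_eq_self Suo fun _ ha => mem_proj_not_mem Suo ha

lemma proj_split (Suo : Set α) :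
    ∀ (s p q : List α) (a : α), proj Suo s = p ++ a :: q →
      ∃ p' q', s = p' ++ a :: q' ∧ proj Suo p' = p := by
  intro s
  induction s with
  | nil => intro p q a h; simp [proj] at h
  | cons b s ih =>
    intro p q a h
    by_cases hb : b ∈ Suo
    · simp only [proj, if_pos hb] at h
      obtain ⟨p', q', hs, hp'⟩ := ih p q a h
      exact ⟨b :: p', q', by rw [hs]; rfl, by simp [proj, hb, hp']⟩
    · simp only [proj, if_neg hb] at h
      cases p with
      | nil =>
        simp only [List.nil_append, List.cons.injEq] at h
        exact ⟨[], s, by rw [h.1]; rfl, rfl⟩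
      | cons c p₀ =>
        simp only [List.cons_append, List.cons.injEq] at h
        obtain ⟨rfl, h2⟩ := h
        obtain ⟨p', q', hs, hp'⟩ := ih p₀ q a h2
        exact ⟨b :: p', q', by rw [hs]; rfl, by simp [proj, hb, hp']⟩

lemma real_prefixClosed (Suo : Set α) (L : Set (List α)) :
    IsPrefixClosed (RealL Suo L) := by
  rintro w ⟨v, hv⟩ p q a hw
  exact hv p (q ++ v) a (by rw [hw]; simp)

lemma fold_prefixClosed {C : Set (List α)} (hC : IsPrefixClosed C) :
    IsPrefixClosed (Fold Suo C) := by
  rintro w ⟨v, hwv⟩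
  refine ⟨hC ⟨proj Suo v, by rw [← proj_append]; exact hwv.1⟩, ?_⟩
  intro p a hp ha
  exact hwv.2 p a (hp.trans (List.prefix_append w v)) ha

/-- `S ⊆ Real(Init S)`. -/
lemma S_subset_real (S : Set (List α)) : S ⊆ RealL Suo (InitL S) := by
  intro s hs p q a h
  exact ⟨p, rfl, ⟨q, by rw [← h]; exact hs⟩⟩

/-- Key lemma: elements of `Real(Init S)` lie in `Fold C` whenever
`Init S ⊆ Fold C` and `C` is prefix-closed (nonemptiness via `[] ∈ Init S`). -/
lemma real_proj_mem {S C : Set (List α)} (hne : ([] : List α) ∈ InitL S)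
    (hIS : InitL S ⊆ Fold Suo C) :
    ∀ w ∈ RealL Suo (InitL S), proj Suo w ∈ C := by
  intro w
  induction w using List.reverseRecOn with
  | nil =>
    intro _
    have := (hIS hne).1
    simpa [proj] using this
  | append_singleton w a ih =>
    intro hw
    obtain ⟨u, hu, hua⟩ := hw w [] a (by simp)
    have hfold := hIS hua
    by_cases ha : a ∈ Suo
    · rw [proj_append]
      simp only [proj, if_pos ha, List.append_nil]
      exact ih (real_prefixClosed _ _ ⟨[a], hw⟩)
    · have h1 : proj Suo (u ++ [a]) ∈ C := hfold.1
      rw [proj_append] at h1 ⊢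
      simp only [proj, if_neg ha] at h1 ⊢
      rwa [← hu]

lemma real_mem_fold {S C : Set (List α)} (hne : ([] : List α) ∈ InitL S)
    (hIS : InitL S ⊆ Fold Suo C) :
    ∀ w ∈ RealL Suo (InitL S), w ∈ Fold Suo C := by
  intro w hw
  refine ⟨real_proj_mem hne hIS w hw, ?_⟩
  intro p a hp ha
  obtain ⟨q, hq⟩ := hp
  obtain ⟨u, hu, hua⟩ := hw p q a (by rw [← hq])
  have hfold := hIS hua
  have := hfold.2 u a (by simp) ha
  rwa [hu] at this

end Aux

/-- Solvability under partial observability iff `Real(Init(S)) ⊆ compl(P) ∪ S`. -/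
theorem partialObservability_solvable_iff (P S : Set (List α)) (Suo : Set α)
    (hS : S.Nonempty)
    (hsolv : ∃ C : Set (List α), IsPrefixClosed C ∧ P ∩ C = S) :
    (∃ C : Set (List α), IsPrefixClosed C ∧ P ∩ C = S ∧ P ∩ Fold Suo C = S) ↔
      RealL Suo (InitL S) ⊆ Pᶜ ∪ S := by
  obtain ⟨C₀, hC₀pc, hC₀⟩ := hsolv
  have hSP : S ⊆ P := by rw [← hC₀]; exact Set.inter_subset_left
  have hneInit : ([] : List α) ∈ InitL S := by
    obtain ⟨s, hs⟩ := hS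
    exact ⟨s, hs⟩
  constructor
  · rintro ⟨C, hCpc, hPC, hPF⟩ w hw
    by_cases hwP : w ∈ P
    · right
      have hSF : S ⊆ Fold Suo C := by rw [← hPF]; exact Set.inter_subset_right
      have hIS : InitL S ⊆ Fold Suo C := by
        rintro u ⟨v, huv⟩
        exact fold_prefixClosed hCpc ⟨v, hSF huv⟩
      have : w ∈ P ∩ Fold Suo C := ⟨hwP, real_mem_fold hneInit hIS w hw⟩
      rwa [hPF] at this
    · exact Or.inl hwP
  · intro hreal
    set C : Set (List α) := RealL Suo (InitL S) with hCdef
    have hSC : S ⊆ C := S_subset_real S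
    have hPC : P ∩ C = S := by
      apply Set.Subset.antisymm
      · rintro w ⟨hwP, hwC⟩
        rcases hreal hwC with h | h
        · exact absurd hwP h
        · exact h
      · intro s hs; exact ⟨hSP hs, hSC hs⟩
    -- S ⊆ Fold C
    have hSFold : S ⊆ Fold Suo C := by
      intro s hs
      constructor
      · -- proj s ∈ Real (Init S)
        intro r q b hfac
        rw [List.append_assoc] at hfac
        obtain ⟨p', q', hs', hp'⟩ := proj_split Suo s r (q) b (by rw [hfac]; rfl)
        refine ⟨p', ?_, ⟨q', ?_⟩⟩
        swap
        · have heq : p' ++ [b] ++ q' = s := by rw [hs']; simp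
          rw [heq]; exact hs
        rw [hp']
        rw [proj_eq_self Suo (fun a ha => ?_)]
        have : a ∈ proj Suo s := by
          rw [hfac]; exact List.mem_append_left _ ha
        exact mem_proj_not_mem Suo this
      · -- prefixes p ++ [a] with a unobservable
        intro p a hp ha
        intro r q b hfac
        rcases q.eq_nil_or_concat with rfl | ⟨q₀, c, rfl⟩
        · -- q = [] : r = proj p, b = a
          rw [List.append_nil] at hfac
          have hlen : ([b] : List α).length = ([a] : List α).length := rfl
          obtain ⟨hr, hb⟩ := List.append_inj' hfac hlen
          obtain ⟨v, hv⟩ := hp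
          refine ⟨p, ?_, ⟨v, ?_⟩⟩
          · rw [← hr]; exact (proj_proj Suo p).symm
          · have hab : a = b := by simpa using hb
            rw [← hab, hv]; exact hs
        · -- q = q₀ ++ [c]
          rw [List.concat_eq_append] at hfac
          rw [show r ++ [b] ++ (q₀ ++ [c]) = (r ++ [b] ++ q₀) ++ [c] by simp] at hfac
          have hlen : ([c] : List α).length = ([a] : List α).length := rfl
          obtain ⟨hr, hc⟩ := List.append_inj' hfac hlen
          -- proj p = r ++ [b] ++ q₀ = r ++ b :: q₀
          have hproj : proj Suo p = r ++ b :: q₀ := by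
            rw [hr]; simp
          obtain ⟨p', q'', hp'', hpr⟩ := proj_split Suo p r q₀ b hproj
          obtain ⟨v, hv⟩ := hp
          refine ⟨p', ?_, ?_⟩
          · rw [hpr, proj_eq_self Suo (fun x hx => ?_)]
            have : x ∈ proj Suo p := by
              rw [hproj]; exact List.mem_append_left _ hx
            exact mem_proj_not_mem Suo this
          · refine ⟨q'' ++ [a] ++ v, ?_⟩
            have : p' ++ [b] ++ (q'' ++ [a] ++ v) = (p ++ [a]) ++ v := by
              rw [hp'']; simp
            rw [this, hv]; exact hs
    -- Fold C ⊆ C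
    have hFoldC : Fold Suo C ⊆ C := by
      rintro w ⟨h1, h2⟩ p q a hfac
      by_cases ha : a ∈ Suo
      · have hpre : p ++ [a] <+: w := ⟨q, by rw [hfac]⟩
        have hmem : proj Suo p ++ [a] ∈ C := h2 p a hpre ha
        obtain ⟨u, hu, hua⟩ := hmem (proj Suo p) [] a (by simp)
        exact ⟨u, by rw [hu, proj_proj], hua⟩
      · have hfac' : proj Suo w = proj Suo p ++ [a] ++ proj Suo q := by
          rw [hfac, proj_append, proj_append]
          simp [proj, ha]
        obtain ⟨u, hu, hua⟩ := h1 (proj Suo p) (proj Suo q) a hfac'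
        exact ⟨u, by rw [hu, proj_proj], hua⟩
    have hPFold : P ∩ Fold Suo C = S := by
      apply Set.Subset.antisymm
      · rintro w ⟨hwP, hwF⟩
        rcases hreal (hFoldC hwF) with h | h
        · exact absurd hwP h
        · exact h
      · intro s hs; exact ⟨hSP hs, hSFold hs⟩
    exact ⟨C, real_prefixClosed Suo (InitL S), hPC, hPFold⟩
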